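/- Let n ≥ 2, let K ∈ 𝒦₀(ℝⁿ), and let r ≥ 0. Then the Lebesgue measure of the radial parallel set {x ∈ ℝⁿ : rdist(x,K) ≤ r} equals |Dₙ| · ∫_{S^{n−1}} (ρ_K(u) + r)^n dσ(u) = Σ_{j=0}^{n} r^j · |D_j| · Ṽ_{n−j}(K) (radial Steiner formula). -/

import Mathlib

open MeasureTheory

/-- The uniform (rotation invariant) probability measure `σ` on the unit sphere
`S^{n-1} ⊆ ℝⁿ`. -/
noncomputable def sphereProb (n : ℕ) :
    Measure (Metric.sphere (0 : EuclideanSpace ℝ (Fin n)) 1) :=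
  ((volume : Measure (EuclideanSpace ℝ (Fin n))).toSphere Set.univ)⁻¹ •
    (volume : Measure (EuclideanSpace ℝ (Fin n))).toSphere

/-- The radial function `ρ_K(u) = max {r : r • u ∈ K}` of a set `K ⊆ ℝⁿ`. -/
noncomputable def radialFn {n : ℕ} (K : Set (EuclideanSpace ℝ (Fin n)))
    (u : EuclideanSpace ℝ (Fin n)) : ℝ :=
  sSup {r : ℝ | r • u ∈ K}

/-- The minimal radial distance `rdist(x, K)`:  `0` if `x ∈ K`, and
`‖x‖ - ρ_K(x/‖x‖)` otherwise. -/
noncomputable def rdist {n : ℕ} (K : Set (EuclideanSpace ℝ (Fin n)))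
    (x : EuclideanSpace ℝ (Fin n)) : ℝ :=
  letI := Classical.dec (x ∈ K)
  if x ∈ K then 0 else ‖x‖ - radialFn K (‖x‖⁻¹ • x)

/-- `|D_k| = π^{k/2} / Γ(k/2 + 1)`, the volume of the `k`-dimensional unit ball. -/
noncomputable def unitBallVolF (k : ℕ) : ℝ :=
  Real.pi ^ ((k : ℝ) / 2) / Real.Gamma ((k : ℝ) / 2 + 1)

/-- The `j`-th dual volume `Ṽ_j(K) = C(n,j)·(|Dₙ|/|D_{n-j}|)·∫_{S^{n-1}} ρ_K(u)^j dσ(u)`. -/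
noncomputable def dualVolInt (n j : ℕ) (K : Set (EuclideanSpace ℝ (Fin n))) : ℝ :=
  (n.choose j : ℝ) * (unitBallVolF n / unitBallVolF (n - j)) *
    ∫ u : Metric.sphere (0 : EuclideanSpace ℝ (Fin n)) 1,
      radialFn K ↑u ^ j ∂(sphereProb n)

section auxiliary

open Metric Set

variable {n : ℕ} {K : Set (EuclideanSpace ℝ (Fin n))}
variable (hKcp : IsCompact K) (hKcv : Convex ℝ K) (hKint : 0 ∈ interior K)
include hKcp hKint

lemma gauge_pos_aux {u : EuclideanSpace ℝ (Fin n)} (hu : u ≠ 0) : 0 < gauge K u :=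
  (gauge_pos (absorbent_nhds_zero (mem_interior_iff_mem_nhds.1 hKint))
    (NormedSpace.isVonNBounded_of_isBounded _ hKcp.isBounded)).2 hu

include hKcv in
lemma mem_iff_gauge {x : EuclideanSpace ℝ (Fin n)} : x ∈ K ↔ gauge K x ≤ 1 := by
  rw [gauge_le_one_iff_mem_closure hKcv (mem_interior_iff_mem_nhds.1 hKint),
    hKcp.isClosed.closure_eq]

include hKcv in
lemma radialFn_eq {u : EuclideanSpace ℝ (Fin n)} (hu : ‖u‖ = 1) :
    radialFn K u = (gauge K u)⁻¹ := by
  have hu0 : u ≠ 0 := by intro h; simp [h] at hu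
  have hg : 0 < gauge K u := gauge_pos_aux hKcp hKint hu0
  refine IsGreatest.csSup_eq ⟨?_, ?_⟩
  · show (gauge K u)⁻¹ • u ∈ K
    rw [mem_iff_gauge hKcp hKcv hKint, gauge_smul_of_nonneg (inv_nonneg.2 hg.le),
      smul_eq_mul, inv_mul_cancel₀ hg.ne']
  · intro t ht
    rcases le_or_gt t 0 with h | h
    · exact h.trans (inv_nonneg.2 hg.le)
    · have h1 : gauge K (t • u) ≤ 1 := (mem_iff_gauge hKcp hKcv hKint).1 ht
      rw [gauge_smul_of_nonneg h.le, smul_eq_mul] at h1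
      have := mul_le_mul_of_nonneg_right h1 (inv_nonneg.2 hg.le)
      simpa [mul_assoc, mul_inv_cancel₀ hg.ne'] using this

include hKcv in
lemma radialFn_pos {u : EuclideanSpace ℝ (Fin n)} (hu : ‖u‖ = 1) :
    0 < radialFn K u := by
  rw [radialFn_eq hKcp hKcv hKint hu]
  exact inv_pos.2 (gauge_pos_aux hKcp hKint (by intro h; simp [h] at hu))

include hKcv in
lemma norm_le_radialFn_of_mem {x : EuclideanSpace ℝ (Fin n)} (hx : x ≠ 0) (hxK : x ∈ K) :
    ‖x‖ ≤ radialFn K (‖x‖⁻¹ • x) := by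
  have hn0 : ‖x‖ ≠ 0 := norm_ne_zero_iff.2 hx
  have hu : ‖(‖x‖⁻¹ • x)‖ = 1 := by
    rw [norm_smul, norm_inv, norm_norm, inv_mul_cancel₀ hn0]
  have hu0 : (‖x‖⁻¹ • x) ≠ 0 := by
    intro h; rw [h, norm_zero] at hu; exact one_ne_zero hu.symm
  have hg : 0 < gauge K (‖x‖⁻¹ • x) := gauge_pos_aux hKcp hKint hu0
  rw [radialFn_eq hKcp hKcv hKint hu]
  have hxu : ‖x‖ • (‖x‖⁻¹ • x) = x := by
    rw [smul_smul, mul_inv_cancel₀ hn0, one_smul]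
  have h1 : gauge K x ≤ 1 := (mem_iff_gauge hKcp hKcv hKint).1 hxK
  rw [← hxu, gauge_smul_of_nonneg (norm_nonneg x), smul_eq_mul] at h1
  have := mul_le_mul_of_nonneg_right h1 (inv_nonneg.2 hg.le)
  simpa [mul_assoc, mul_inv_cancel₀ hg.ne'] using this

include hKcv in
lemma continuous_radialFn_sphere :
    Continuous fun u : sphere (0 : EuclideanSpace ℝ (Fin n)) 1 => radialFn K u.1 := by
  have h : Continuous fun u : sphere (0 : EuclideanSpace ℝ (Fin n)) 1 =>
      (gauge K u.1)⁻¹ := by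
    refine Continuous.inv₀ ?_ ?_
    · exact (continuous_gauge hKcv (mem_interior_iff_mem_nhds.1 hKint)).comp
        continuous_subtype_val
    · exact fun u => (gauge_pos_aux hKcp hKint (ne_of_mem_sphere u.2 one_ne_zero)).ne'
  refine Continuous.congr h fun u => ?_
  exact (radialFn_eq hKcp hKcv hKint (mem_sphere_zero_iff_norm.1 u.2)).symm

end auxiliary

section measureAux

open Metric Set

lemma volumeIoiPow_apply_Iic (m : ℕ) (x : Set.Ioi (0 : ℝ)) :
    Measure.volumeIoiPow m (Iic x) = ENNReal.ofReal (x.1 ^ (m + 1) / (m + 1)) := by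
  have h0 : Measure.volumeIoiPow m {x} = 0 := by
    rw [Measure.volumeIoiPow, withDensity_apply _ (measurableSet_singleton x)]
    refine setLIntegral_measure_zero _ _ ?_
    rw [comap_subtype_coe_apply measurableSet_Ioi, image_singleton, measure_singleton]
  have h1 : Measure.volumeIoiPow m (Iic x) = Measure.volumeIoiPow m (Iio x) := by
    rw [← Set.Iio_union_right]
    exact le_antisymm ((measure_union_le _ _).trans (by simp [h0]))
      (measure_mono subset_union_left)
  rw [h1, Measure.volumeIoiPow_apply_Iio]

lemma unitBallVolF_pos (k : ℕ) : 0 < unitBallVolF k :=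
  div_pos (Real.rpow_pos_of_pos Real.pi_pos _) (Real.Gamma_pos_of_pos (by positivity))

lemma volume_unitBall_toReal {n : ℕ} (hn : 1 ≤ n) :
    (volume (ball (0 : EuclideanSpace ℝ (Fin n)) 1)).toReal = unitBallVolF n := by
  haveI : Nonempty (Fin n) := ⟨⟨0, hn⟩⟩
  rw [EuclideanSpace.volume_ball]
  have h1 : Real.sqrt Real.pi ^ n = Real.pi ^ ((n : ℝ) / 2) := by
    rw [Real.sqrt_eq_rpow, ← Real.rpow_natCast (Real.pi ^ (1/2 : ℝ)) n,
      ← Real.rpow_mul Real.pi_pos.le]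
    norm_num
    ring_nf
  simp only [Fintype.card_fin, ENNReal.ofReal_one, one_pow, one_mul]
  rw [ENNReal.toReal_ofReal (by positivity)]
  rw [unitBallVolF, h1]

lemma toSphere_univ_toReal {n : ℕ} (hn : 1 ≤ n) :
    ((volume : Measure (EuclideanSpace ℝ (Fin n))).toSphere Set.univ).toReal
      = n * unitBallVolF n := by
  rw [Measure.toSphere_apply_univ, ENNReal.toReal_mul, ENNReal.toReal_natCast,
    volume_unitBall_toReal hn, finrank_euclideanSpace_fin]

lemma toSphere_univ_ne_zero {n : ℕ} (hn : 1 ≤ n) :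
    ((volume : Measure (EuclideanSpace ℝ (Fin n))).toSphere Set.univ) ≠ 0 := by
  rw [Measure.toSphere_apply_univ]
  refine mul_ne_zero ?_ ?_
  · simp [finrank_euclideanSpace_fin]; omega
  · exact (measure_ball_pos _ _ one_pos).ne'

lemma toSphere_univ_ne_top {n : ℕ} :
    ((volume : Measure (EuclideanSpace ℝ (Fin n))).toSphere Set.univ) ≠ ⊤ :=
  (measure_lt_top _ _).ne

end measureAux

open Metric Set in
/-- Radial Steiner formula: for a convex body `K ⊆ ℝⁿ` (`n ≥ 2`) containing the origin in
its interior and `r ≥ 0`, the Lebesgue measure of `{x : rdist(x,K) ≤ r}` equals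
`|Dₙ| ∫_{S^{n-1}} (ρ_K(u) + r)^n dσ(u) = Σ_{j=0}^n r^j |D_j| Ṽ_{n-j}(K)`. -/
theorem stmt7 {n : ℕ} (hn : 2 ≤ n)
    (K : Set (EuclideanSpace ℝ (Fin n)))
    (hKcp : IsCompact K) (hKcv : Convex ℝ K) (hKint : 0 ∈ interior K)
    (r : ℝ) (hr : 0 ≤ r) :
    (volume {x : EuclideanSpace ℝ (Fin n) | rdist K x ≤ r}).toReal
      = unitBallVolF n * ∫ u : Metric.sphere (0 : EuclideanSpace ℝ (Fin n)) 1,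
          (radialFn K ↑u + r) ^ n ∂(sphereProb n)
    ∧ unitBallVolF n * (∫ u : Metric.sphere (0 : EuclideanSpace ℝ (Fin n)) 1,
          (radialFn K ↑u + r) ^ n ∂(sphereProb n))
      = ∑ j ∈ Finset.range (n + 1), r ^ j * unitBallVolF j * dualVolInt n (n - j) K := by
  have hn1 : 1 ≤ n := le_trans one_le_two hn
  haveI : Nontrivial (EuclideanSpace ℝ (Fin n)) :=
    Module.nontrivial_of_finrank_pos (R := ℝ) (by rw [finrank_euclideanSpace_fin]; omega)
  set T := (volume : Measure (EuclideanSpace ℝ (Fin n))).toSphere with hT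
  have hσT : sphereProb n = (T Set.univ)⁻¹ • T := rfl
  haveI hprob : IsProbabilityMeasure (sphereProb n) := by
    constructor
    rw [hσT, Measure.smul_apply, smul_eq_mul,
      ENNReal.inv_mul_cancel (toSphere_univ_ne_zero hn1) toSphere_univ_ne_top]
  have hρcont : Continuous
      fun u : sphere (0 : EuclideanSpace ℝ (Fin n)) 1 => radialFn K u.1 :=
    continuous_radialFn_sphere hKcp hKcv hKint
  set f : sphere (0 : EuclideanSpace ℝ (Fin n)) 1 → ℝ :=
    fun u => radialFn K u.1 + r with hf
  have hfcont : Continuous f := hρcont.add continuous_const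
  have hfpos : ∀ u, 0 < f u := fun u =>
    add_pos_of_pos_of_nonneg
      (radialFn_pos hKcp hKcv hKint (mem_sphere_zero_iff_norm.1 u.2)) hr
  constructor
  · -- Part 1
    set tset : Set (sphere (0 : EuclideanSpace ℝ (Fin n)) 1 × Set.Ioi (0 : ℝ)) :=
      {p | (p.2 : ℝ) ≤ f p.1} with htset
    have htm : MeasurableSet tset :=
      measurableSet_le (continuous_subtype_val.comp continuous_snd).measurable
        (hfcont.comp continuous_fst).measurable
    have hchar : ∀ x : EuclideanSpace ℝ (Fin n), x ≠ 0 →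
        (rdist K x ≤ r ↔ ‖x‖ ≤ radialFn K (‖x‖⁻¹ • x) + r) := by
      intro x hx
      rw [rdist]
      split_ifs with h
      · refine ⟨fun _ => ?_, fun _ => hr⟩
        exact le_add_of_le_of_nonneg (norm_le_radialFn_of_mem hKcp hKcv hKint hx h) hr
      · constructor <;> intro h' <;> linarith
    have hpre : (Subtype.val ⁻¹' {x : EuclideanSpace ℝ (Fin n) | rdist K x ≤ r} :
        Set (({0}ᶜ : Set (EuclideanSpace ℝ (Fin n)))))
          = homeomorphUnitSphereProd (EuclideanSpace ℝ (Fin n)) ⁻¹' tset := by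
      ext x
      simp only [Set.mem_preimage, Set.mem_setOf_eq, htset,
        homeomorphUnitSphereProd_apply_fst_coe, homeomorphUnitSphereProd_apply_snd_coe, hf]
      exact hchar x.1 x.2
    have hvol0 : volume {x : EuclideanSpace ℝ (Fin n) | rdist K x ≤ r}
        = (volume.comap (Subtype.val :
            ({0}ᶜ : Set (EuclideanSpace ℝ (Fin n))) → EuclideanSpace ℝ (Fin n)))
          (Subtype.val ⁻¹' {x | rdist K x ≤ r}) := by
      rw [comap_subtype_coe_apply
          (measurableSet_singleton (0 : EuclideanSpace ℝ (Fin n))).compl,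
        Subtype.image_preimage_coe, Set.inter_comm, ← Set.diff_eq,
        measure_diff_null (measure_singleton _)]
    have hmp := (volume :
      Measure (EuclideanSpace ℝ (Fin n))).measurePreserving_homeomorphUnitSphereProd
    rw [finrank_euclideanSpace_fin] at hmp
    have hvol1 : volume {x : EuclideanSpace ℝ (Fin n) | rdist K x ≤ r}
        = (T.prod (Measure.volumeIoiPow (n - 1))) tset := by
      rw [hvol0, hpre, hmp.measure_preimage htm.nullMeasurableSet]
    have hsec : ∀ u, (Measure.volumeIoiPow (n - 1)) (Prod.mk u ⁻¹' tset)
        = ENNReal.ofReal (n : ℝ)⁻¹ * ENNReal.ofReal (f u ^ n) := by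
      intro u
      have hIic : Prod.mk u ⁻¹' tset = Iic (⟨f u, hfpos u⟩ : Set.Ioi (0 : ℝ)) := by
        ext t
        simp [htset, Subtype.ext_iff, ← Subtype.coe_le_coe]
      rw [hIic, volumeIoiPow_apply_Iic]
      have hm1 : n - 1 + 1 = n := by omega
      have hc : ((n - 1 : ℕ) : ℝ) + 1 = (n : ℝ) := by
        rw [Nat.cast_sub hn1]; ring
      rw [hm1, hc, div_eq_inv_mul, ENNReal.ofReal_mul (by positivity)]
    have hvol2 : volume {x : EuclideanSpace ℝ (Fin n) | rdist K x ≤ r}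
        = ENNReal.ofReal (n : ℝ)⁻¹ * ∫⁻ u, ENNReal.ofReal (f u ^ n) ∂T := by
      rw [hvol1, Measure.prod_apply htm]
      rw [lintegral_congr hsec]
      exact lintegral_const_mul' _ _ ENNReal.ofReal_ne_top
    have hint : ∫ u, (radialFn K u.1 + r) ^ n ∂(sphereProb n)
        = ((T Set.univ)⁻¹ * ∫⁻ u, ENNReal.ofReal (f u ^ n) ∂T).toReal := by
      rw [integral_eq_lintegral_of_nonneg_ae
          (Filter.Eventually.of_forall fun u => pow_nonneg (hfpos u).le n)
          ((hfcont.pow n).aestronglyMeasurable), hσT, lintegral_smul_measure, smul_eq_mul]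
    rw [hvol2, hint, ENNReal.toReal_mul, ENNReal.toReal_mul,
      ENNReal.toReal_ofReal (by positivity), ENNReal.toReal_inv, toSphere_univ_toReal hn1]
    have h0 : (unitBallVolF n) ≠ 0 := (unitBallVolF_pos n).ne'
    have hn0 : (n : ℝ) ≠ 0 := by positivity
    field_simp
  · -- Part 2
    have hInt : ∀ k : ℕ, Integrable
        (fun u : sphere (0 : EuclideanSpace ℝ (Fin n)) 1 => radialFn K u.1 ^ k)
        (sphereProb n) := fun k =>
      (hρcont.pow k).integrable_of_hasCompactSupport (HasCompactSupport.of_compactSpace _)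
    set F : ℕ → ℝ := fun k => unitBallVolF n *
      ((∫ u, radialFn K u.1 ^ k ∂(sphereProb n)) * (r ^ (n - k) * (n.choose k : ℝ)))
      with hF
    have h2 : unitBallVolF n * (∫ u, (radialFn K u.1 + r) ^ n ∂(sphereProb n))
        = ∑ k ∈ Finset.range (n + 1), F k := by
      have e1 : ∫ u, (radialFn K u.1 + r) ^ n ∂(sphereProb n)
          = ∫ u, ∑ k ∈ Finset.range (n + 1),
              radialFn K u.1 ^ k * (r ^ (n - k) * (n.choose k : ℝ)) ∂(sphereProb n) := by
        refine integral_congr_ae (Filter.Eventually.of_forall fun u => ?_)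
        simp only
        rw [add_pow]
        exact Finset.sum_congr rfl fun k _ => by ring
      rw [e1, integral_finset_sum _ fun k _ => (hInt k).mul_const _, Finset.mul_sum]
      exact Finset.sum_congr rfl fun k _ => by rw [integral_mul_const]
    have hterm : ∀ j ∈ Finset.range (n + 1),
        r ^ j * unitBallVolF j * dualVolInt n (n - j) K = F (n + 1 - 1 - j) := by
      intro j hj
      have hjn : j ≤ n := Nat.lt_succ_iff.mp (Finset.mem_range.mp hj)
      have e3 : n + 1 - 1 - j = n - j := by omega
      rw [e3]
      simp only [hF, dualVolInt, Nat.sub_sub_self hjn, Nat.choose_symm hjn]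
      have h0 : unitBallVolF j ≠ 0 := (unitBallVolF_pos j).ne'
      field_simp
    rw [h2, Finset.sum_congr rfl hterm, Finset.sum_range_reflect]
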